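/- Let φ be an unbounded lscsm on ℕ. Suppose there is M > 0 such that B = {A ⊆ ℕ : φ(A) ≤ M} covers ℕ, and there is a strictly increasing sequence of finite sets (K_n) with ⋃K_n = ℕ, and for each n a subfamily S_n ⊆ P(K_n) ∩ B covering K_n, with δ = inf_n δ(K_n, S_n) > 0. Then every (finitely additive, finitely supported) measure μ dominated by φ satisfies μ(ℕ) ≤ M/δ; in particular the maximal nonpathological minorant φ̂ is bounded by M/δ. -/
import Mathlib


open scoped ENNReal

/-- A lower semicontinuous submeasure on ℕ. -/
def IsLSCSM (φ : Set ℕ → ℝ≥0∞) : Prop :=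
  φ ∅ = 0 ∧ (∀ A B : Set ℕ, A ⊆ B → φ A ≤ φ B) ∧
    (∀ A B : Set ℕ, φ (A ∪ B) ≤ φ A + φ B) ∧
    (∀ n : ℕ, φ {n} < ⊤) ∧
    (∀ A : Set ℕ, φ A = ⨆ n : ℕ, φ (A ∩ Set.Iic n))

theorem stmt6 (φ : Set ℕ → ℝ≥0∞) (hφ : IsLSCSM φ) (hunb : φ Set.univ = ⊤)
    (M : ℝ≥0∞) (hM : 0 < M)
    -- the family B = {A : φ(A) ≤ M} covers ℕ:
    (hBcov : ∀ n : ℕ, ∃ A : Set ℕ, φ A ≤ M ∧ n ∈ A)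
    -- a strictly increasing sequence of finite sets covering ℕ:
    (K : ℕ → Finset ℕ) (hKmono : ∀ n, K n ⊂ K (n + 1)) (hKcov : ∀ m : ℕ, ∃ n, m ∈ K n)
    -- for each n, a subfamily Sn ⊆ P(K n) ∩ B covering K n:
    (S : ℕ → Finset (Finset ℕ))
    (hSsub : ∀ n, ∀ s ∈ S n, s ⊆ K n ∧ φ ↑s ≤ M)
    (hScov : ∀ n, ∀ i ∈ K n, ∃ s ∈ S n, i ∈ s)
    -- δ is a positive lower bound for the covering numbers δ(K n, S n):
    (δ : ℝ≥0∞) (hδ : 0 < δ)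
    (hδle : ∀ n, ∀ i ∈ K n,
      δ ≤ (((S n).filter fun s => i ∈ s).card : ℝ≥0∞) / ((S n).card : ℝ≥0∞)) :
    -- every finitely supported measure dominated by φ has total mass at most M/δ,
    (∀ m : ℕ → ℝ≥0∞, {n : ℕ | m n ≠ 0}.Finite →
        (∀ A : Set ℕ, (∑' n : A, m n) ≤ φ A) → (∑' n : ℕ, m n) ≤ M / δ) ∧
    -- in particular, φ̂ is bounded by M/δ:
    (∀ A : Set ℕ,
      (⨆ (m : ℕ → ℝ≥0∞) (_ : ∀ B : Set ℕ, (∑' n : B, m n) ≤ φ B), ∑' n : A, m n) ≤ M / δ) := by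
  classical
  have hmono : Monotone K := monotone_nat_of_le_succ fun n => (hKmono n).subset
  have hδtop : δ ≠ ⊤ := by
    obtain ⟨i, hi, -⟩ := Finset.exists_of_ssubset (hKmono 0)
    obtain ⟨s, hs, his⟩ := hScov 1 i hi
    have hc : ((S 1).card : ℝ≥0∞) ≠ 0 := by
      simpa using Finset.card_pos.mpr ⟨s, hs⟩ |>.ne'
    exact ne_top_of_le_ne_top (ENNReal.div_lt_top (by simp) hc).ne (hδle 1 i hi)
  have main : ∀ m : ℕ → ℝ≥0∞, {n : ℕ | m n ≠ 0}.Finite →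
      (∀ A : Set ℕ, (∑' n : A, m n) ≤ φ A) → (∑' n : ℕ, m n) ≤ M / δ := by
    intro m hfin hdom
    set F := hfin.toFinset with hF
    set N := (F.sup fun i => (hKcov i).choose) + 1 with hN
    have hFK : ∀ i ∈ F, i ∈ K N := by
      intro i hi
      have h1 : (hKcov i).choose ≤ N := by
        have h := Finset.le_sup (f := fun i => (hKcov i).choose) hi
        rw [hN]
        exact le_trans h (Nat.le_succ _)
      exact Finset.le_iff_subset.mp (hmono h1) (hKcov i).choose_spec
    have hKN : ∃ j, j ∈ K N := by
      obtain ⟨j, hj, -⟩ := Finset.exists_of_ssubset (hKmono 0)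
      exact ⟨j, Finset.le_iff_subset.mp (hmono (by omega : 1 ≤ N)) hj⟩
    obtain ⟨j, hjK⟩ := hKN
    obtain ⟨s0, hs0, -⟩ := hScov N j hjK
    have hc0 : ((S N).card : ℝ≥0∞) ≠ 0 := by
      simpa using Finset.card_pos.mpr ⟨s0, hs0⟩ |>.ne'
    have hctop : ((S N).card : ℝ≥0∞) ≠ ⊤ := ENNReal.natCast_ne_top _
    -- double counting
    have hswap : ∑ s ∈ S N, ∑ i ∈ F, (if i ∈ s then m i else 0)
        = ∑ i ∈ F, (((S N).filter fun s => i ∈ s).card : ℝ≥0∞) * m i := by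
      rw [Finset.sum_comm]
      refine Finset.sum_congr rfl fun i _ => ?_
      rw [← Finset.sum_filter, Finset.sum_const, nsmul_eq_mul]
    have hupper : ∀ s ∈ S N, ∑ i ∈ F, (if i ∈ s then m i else 0) ≤ M := by
      intro s hs
      rw [← Finset.sum_filter]
      calc ∑ i ∈ F.filter (· ∈ s), m i ≤ ∑ i ∈ s, m i :=
            Finset.sum_le_sum_of_subset (fun i hi => (Finset.mem_filter.mp hi).2)
        _ = ∑' (x : (↑s : Set ℕ)), m x := (Finset.tsum_subtype s m).symm
        _ ≤ φ ↑s := hdom ↑s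
        _ ≤ M := (hSsub N s hs).2
    have hlower : ∀ i ∈ F, δ * ((S N).card : ℝ≥0∞) * m i
        ≤ (((S N).filter fun s => i ∈ s).card : ℝ≥0∞) * m i := by
      intro i hi
      have h := hδle N i (hFK i hi)
      have h2 : δ * ((S N).card : ℝ≥0∞) ≤ (((S N).filter fun s => i ∈ s).card : ℝ≥0∞) :=
        (ENNReal.le_div_iff_mul_le (Or.inl hc0) (Or.inl hctop)).mp h
      exact mul_le_mul_left h2 (m i)
    have hchain : δ * ((S N).card : ℝ≥0∞) * ∑ i ∈ F, m i ≤ ((S N).card : ℝ≥0∞) * M := by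
      calc δ * ((S N).card : ℝ≥0∞) * ∑ i ∈ F, m i
          = ∑ i ∈ F, δ * ((S N).card : ℝ≥0∞) * m i := Finset.mul_sum _ _ _
        _ ≤ ∑ i ∈ F, (((S N).filter fun s => i ∈ s).card : ℝ≥0∞) * m i :=
            Finset.sum_le_sum hlower
        _ = ∑ s ∈ S N, ∑ i ∈ F, (if i ∈ s then m i else 0) := hswap.symm
        _ ≤ ∑ _s ∈ S N, M := Finset.sum_le_sum hupper
        _ = ((S N).card : ℝ≥0∞) * M := by rw [Finset.sum_const, nsmul_eq_mul]
    have hcancel : δ * ∑ i ∈ F, m i ≤ M := by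
      have h3 : (δ * ∑ i ∈ F, m i) * ((S N).card : ℝ≥0∞)
          ≤ M * ((S N).card : ℝ≥0∞) := by
        calc (δ * ∑ i ∈ F, m i) * ((S N).card : ℝ≥0∞)
            = δ * ((S N).card : ℝ≥0∞) * ∑ i ∈ F, m i := by ring
          _ ≤ ((S N).card : ℝ≥0∞) * M := hchain
          _ = M * ((S N).card : ℝ≥0∞) := mul_comm _ _
      exact (ENNReal.mul_le_mul_iff_left hc0 hctop).mp h3
    have htsum : (∑' n : ℕ, m n) = ∑ i ∈ F, m i := by
      refine tsum_eq_sum fun i hi => ?_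
      by_contra h
      exact hi (hfin.mem_toFinset.mpr h)
    rw [htsum]
    rw [ENNReal.le_div_iff_mul_le (Or.inl hδ.ne') (Or.inl hδtop), mul_comm]
    exact hcancel
  refine ⟨main, fun A => ?_⟩
  refine iSup_le fun m => iSup_le fun hdom => ?_
  rw [ENNReal.tsum_eq_iSup_sum]
  refine iSup_le fun Fs => ?_
  set N := Fs.sup fun i => (i : ℕ) with hNdef
  set m' : ℕ → ℝ≥0∞ := fun i => if i ∈ A ∧ i ≤ N then m i else 0 with hm'
  have hle : ∀ i, m' i ≤ m i := by
    intro i; simp only [hm']; split <;> simp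
  have hfin' : {n : ℕ | m' n ≠ 0}.Finite := by
    refine (Set.finite_Iic N).subset fun n hn => ?_
    simp only [Set.mem_setOf_eq, hm'] at hn
    by_contra h
    simp only [Set.mem_Iic, not_le] at h
    exact hn (if_neg fun hc => absurd hc.2 (by omega))
  have hdom' : ∀ B : Set ℕ, (∑' n : B, m' n) ≤ φ B := fun B =>
    le_trans (ENNReal.tsum_le_tsum fun n => hle n) (hdom B)
  have hmain := main m' hfin' hdom'
  calc ∑ i ∈ Fs, m ↑i = ∑ i ∈ Fs, m' ↑i := by
        refine Finset.sum_congr rfl fun i hi => ?_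
        have h2 : (↑i : ℕ) ≤ N := by rw [hNdef]; exact Finset.le_sup hi
        exact (if_pos ⟨i.2, h2⟩).symm
    _ = ∑ j ∈ Fs.image (Subtype.val), m' j := by
        rw [Finset.sum_image (fun a _ b _ h => Subtype.ext h)]
    _ ≤ ∑' n : ℕ, m' n := ENNReal.sum_le_tsum _
    _ ≤ M / δ := hmain
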